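/- For the singularity-degree-two counter-example, fix α > 0 and δ > 0. For all sufficiently small t > 0 there exists y ∈ ℝ³ such that the matrix [[1+tα−y₁, 0, −y₃, −y₃], [0, tα−y₂, −y₁, 0], [−y₃, −y₁, tα−y₃, 0], [−y₃, 0, 0, tα]] is positive definite and (1+t)y₁ + t·y₂ + t·y₃ ≥ 1 − δ. -/

import Mathlib

private lemma quad_pos (s γ ζ u y₁ : ℝ) (hs : 0 < s) (hγ : 0 < γ) (hζ : 0 < ζ)
    (hu : u = γ * s) (hγζ : γ ^ 2 < ζ) (a b c d : ℝ)
    (hx : ¬(a = 0 ∧ b = 0 ∧ c = 0 ∧ d = 0)) :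
    0 < (s ^ 2 + γ ^ 2 + ζ) * a ^ 2 + (s ^ 2 + y₁ ^ 2 / u) * b ^ 2 + (s ^ 2 + u) * c ^ 2
      + s ^ 2 * d ^ 2 + 2 * γ * s * a * c + 2 * γ * s * a * d - 2 * y₁ * b * c := by
  have hu0 : 0 < u := by rw [hu]; positivity
  have key : (s ^ 2 + γ ^ 2 + ζ) * a ^ 2 + (s ^ 2 + y₁ ^ 2 / u) * b ^ 2 + (s ^ 2 + u) * c ^ 2
      + s ^ 2 * d ^ 2 + 2 * γ * s * a * c + 2 * γ * s * a * d - 2 * y₁ * b * c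
      = (γ * a + s * c) ^ 2 + (ζ * a + γ * s * d) ^ 2 / ζ + (y₁ * b - u * c) ^ 2 / u
        + s ^ 2 * a ^ 2 + s ^ 2 * b ^ 2 + (1 - γ ^ 2 / ζ) * s ^ 2 * d ^ 2 := by
    subst hu
    field_simp
    ring
  rw [key]
  have hcoef : 0 < 1 - γ ^ 2 / ζ := by
    rw [sub_pos, div_lt_one hζ]; exact hγζ
  have h1 : (0:ℝ) ≤ (γ * a + s * c) ^ 2 := sq_nonneg _
  have h2 : (0:ℝ) ≤ (ζ * a + γ * s * d) ^ 2 / ζ := by positivity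
  have h3 : (0:ℝ) ≤ (y₁ * b - u * c) ^ 2 / u := by positivity
  have h4 : (0:ℝ) ≤ s ^ 2 * a ^ 2 := by positivity
  have h5 : (0:ℝ) ≤ s ^ 2 * b ^ 2 := by positivity
  have h6 : (0:ℝ) ≤ (1 - γ ^ 2 / ζ) * s ^ 2 * d ^ 2 := by positivity
  by_cases ha : a = 0
  · by_cases hb : b = 0
    · by_cases hd : d = 0
      · have hc : c ≠ 0 := by tauto
        have hp : 0 < (s ^ 2 + u) * c ^ 2 := by positivity
        have : 0 < (γ * a + s * c) ^ 2 + (y₁ * b - u * c) ^ 2 / u := by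
          subst ha; subst hb
          have e1 : (γ * 0 + s * c) ^ 2 = s ^ 2 * c ^ 2 := by ring
          have : 0 < s ^ 2 * c ^ 2 := by positivity
          nlinarith [this, h3]
        linarith [h2, h4, h5, h6, this]
      · have hp : 0 < (1 - γ ^ 2 / ζ) * s ^ 2 * d ^ 2 := by positivity
        linarith
    · have hp : 0 < s ^ 2 * b ^ 2 := by positivity
      linarith
  · have hp : 0 < s ^ 2 * a ^ 2 := by positivity
    linarith

set_option maxHeartbeats 1000000 in

set_option maxHeartbeats 1000000 in
/-- For the singularity-degree-two counter-example, for every `α > 0` and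
`δ > 0`, and every sufficiently small `t > 0`, the perturbed dual problem
`D(tα, t)` has a strictly feasible solution with objective value `≥ 1 − δ`. -/
theorem counterexample_perturbed_value
    (α δ : ℝ) (hα : 0 < α) (hδ : 0 < δ) :
    ∃ t₀ : ℝ, 0 < t₀ ∧ ∀ t : ℝ, 0 < t → t < t₀ →
      ∃ y₁ y₂ y₃ : ℝ,
        (!![1 + t * α - y₁, 0, -y₃, -y₃;
            0, t * α - y₂, -y₁, 0;
            -y₃, -y₁, t * α - y₃, 0;
            -y₃, 0, 0, t * α] : Matrix (Fin 4) (Fin 4) ℝ).PosDef ∧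
        (1 + t) * y₁ + t * y₂ + t * y₃ ≥ 1 - δ := by
  have hδ'0 : 0 < min δ 1 := lt_min hδ one_pos
  set δ' : ℝ := min δ 1 with hδ'def
  have hδ'δ : δ' ≤ δ := min_le_left _ _
  have hδ'1 : δ' ≤ 1 := min_le_right _ _
  have hγ0 : 0 < Real.sqrt (δ'/8) := Real.sqrt_pos.mpr (by linarith)
  set γ : ℝ := Real.sqrt (δ'/8) with hγdef
  have hγsq : γ ^ 2 = δ'/8 := Real.sq_sqrt (by linarith)
  have hsa0 : 0 < Real.sqrt α := Real.sqrt_pos.mpr hα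
  set sa : ℝ := Real.sqrt α with hsadef
  have hc₁0 : 0 < sa * γ * δ' / 4 := by positivity
  have hc₂0 : 0 < δ' / (4 * γ * sa) := by positivity
  refine ⟨min 1 (min ((sa * γ * δ' / 4) ^ 2) ((δ' / (4 * γ * sa)) ^ 2)), by positivity, ?_⟩
  intro t ht ht₀
  have ht1 : t ≤ 1 := le_of_lt (lt_of_lt_of_le ht₀ (min_le_left _ _))
  have hst0 : 0 < Real.sqrt t := Real.sqrt_pos.mpr ht
  set st : ℝ := Real.sqrt t with hstdef
  have hst2 : st ^ 2 = t := Real.sq_sqrt ht.le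
  have hst1 : st ≤ 1 := Real.sqrt_le_one.mpr ht1
  have hstc1 : st ≤ sa * γ * δ' / 4 := by
    have := Real.sqrt_le_sqrt (le_of_lt (lt_of_lt_of_le ht₀
      ((min_le_right _ _).trans (min_le_left _ _))))
    rwa [Real.sqrt_sq hc₁0.le] at this
  have hstc2 : st ≤ δ' / (4 * γ * sa) := by
    have := Real.sqrt_le_sqrt (le_of_lt (lt_of_lt_of_le ht₀
      ((min_le_right _ _).trans (min_le_right _ _))))
    rwa [Real.sqrt_sq hc₂0.le] at this
  have hs0 : 0 < Real.sqrt (t * α) := Real.sqrt_pos.mpr (by positivity)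
  set s : ℝ := Real.sqrt (t * α) with hsdef
  have hs2 : s ^ 2 = t * α := Real.sq_sqrt (by positivity)
  have hs' : s = st * sa := by rw [hsdef, hstdef, hsadef, Real.sqrt_mul ht.le]
  set u : ℝ := γ * s with hudef
  have hu0 : 0 < u := by rw [hudef]; positivity
  set y₁ : ℝ := 1 - δ' / 2 with hy₁def
  have hy₁0 : 0 ≤ y₁ := by rw [hy₁def]; linarith
  have hy₁1 : y₁ ≤ 1 := by rw [hy₁def]; linarith
  refine ⟨y₁, -(y₁ ^ 2 / u), -u, Matrix.posDef_iff_dotProduct_mulVec.mpr ⟨?_, ?_⟩, ?_⟩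
  · -- Hermitian
    ext i j
    fin_cases i <;> fin_cases j <;>
      simp [Matrix.conjTranspose_apply, Matrix.vecHead, Matrix.vecTail]
  · -- positivity of the quadratic form
    intro x hx
    have hx' : ¬(x 0 = 0 ∧ x 1 = 0 ∧ x 2 = 0 ∧ x 3 = 0) := by
      rintro ⟨h0, h1, h2, h3⟩
      apply hx
      funext i
      fin_cases i <;> assumption
    have hQ := quad_pos s γ (3 * δ' / 8) u y₁ hs0 hγ0 (by linarith) hudef
      (by rw [hγsq]; linarith) (x 0) (x 1) (x 2) (x 3) hx'
    simp only [star_trivial]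
    simp [Matrix.mulVec, dotProduct, Fin.sum_univ_four, Matrix.vecHead, Matrix.vecTail]
    have key : x 0 * ((1 + t * α - y₁) * x 0 + u * x 2 + u * x 3) +
        x 1 * ((t * α + y₁ ^ 2 / u) * x 1 + -(y₁ * x 2)) +
        x 2 * (u * x 0 + -(y₁ * x 1) + (t * α + u) * x 2) +
        x 3 * (u * x 0 + t * α * x 3)
        = (s ^ 2 + γ ^ 2 + 3 * δ' / 8) * x 0 ^ 2 + (s ^ 2 + y₁ ^ 2 / u) * x 1 ^ 2
          + (s ^ 2 + u) * x 2 ^ 2 + s ^ 2 * x 3 ^ 2 + 2 * γ * s * x 0 * x 2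
          + 2 * γ * s * x 0 * x 3 - 2 * y₁ * x 1 * x 2 := by
      rw [← hs2, hudef, hy₁def]
      linear_combination -(x 0) ^ 2 * hγsq
    rw [key]
    exact hQ
  · -- objective value
    have hy₁sq : y₁ ^ 2 ≤ 1 := by nlinarith
    have hA : t * (y₁ ^ 2 / u) ≤ δ' / 4 := by
      rw [mul_div_assoc', div_le_iff₀ hu0, hudef, hs', ← hst2]
      calc st ^ 2 * y₁ ^ 2 ≤ st ^ 2 * 1 := mul_le_mul_of_nonneg_left hy₁sq (sq_nonneg st)
        _ = st * st := by ring
        _ ≤ st * (sa * γ * δ' / 4) := mul_le_mul_of_nonneg_left hstc1 hst0.le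
        _ = δ' / 4 * (γ * (st * sa)) := by ring
    have hB : t * u ≤ δ' / 4 := by
      have e2 : t * u = γ * sa * st ^ 3 := by rw [hudef, hs', ← hst2]; ring
      have h3le : st ^ 3 ≤ st := by nlinarith
      have hgs : 0 ≤ γ * sa := by positivity
      have step1 : γ * sa * st ^ 3 ≤ γ * sa * st := mul_le_mul_of_nonneg_left h3le hgs
      have step2 : γ * sa * st ≤ γ * sa * (δ' / (4 * γ * sa)) :=
        mul_le_mul_of_nonneg_left hstc2 hgs
      have step3 : γ * sa * (δ' / (4 * γ * sa)) = δ' / 4 := by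
        field_simp
      rw [e2]
      linarith
    have h1 : (1 + t) * y₁ ≥ y₁ := by nlinarith
    have : (1 + t) * y₁ + t * -(y₁ ^ 2 / u) + t * -u
        ≥ y₁ - δ' / 4 - δ' / 4 := by
      have := hA; have := hB
      nlinarith [hA, hB]
    linarith [hy₁def.le, hy₁def.ge, hδ'δ, this]
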